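/- Let P be an atomic Puiseux monoid. If P contains a stable atom, i.e., an atom a₀ such that infinitely many atoms a of P satisfy n(a) = n(a₀) (equal numerators in lowest terms), then there exists d ∈ ℕ such that for all k ≥ d, the union of sets of lengths U_k(P) is infinite, hence the k-th local elasticity ρ_k(P) = sup U_k(P) is infinite. -/
import Mathlib


/-- A Puiseux monoid: an additive submonoid of ℚ consisting of nonnegative rationals. -/
def PM.Puiseux (P : AddSubmonoid ℚ) : Prop := ∀ x ∈ P, 0 ≤ x

/-- `a` is an atom of `P`. -/
def PM.IsAtom (P : AddSubmonoid ℚ) (a : ℚ) : Prop :=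
  a ∈ P ∧ a ≠ 0 ∧ ∀ x ∈ P, ∀ y ∈ P, a = x + y → x = 0 ∨ y = 0

/-- A factorization of `x` is a multiset of atoms of `P` summing to `x`. -/
def PM.IsFactorization (P : AddSubmonoid ℚ) (x : ℚ) (z : Multiset ℚ) : Prop :=
  (∀ a ∈ z, PM.IsAtom P a) ∧ z.sum = x

/-- The set of lengths of `x`. -/
def PM.Lengths (P : AddSubmonoid ℚ) (x : ℚ) : Set ℕ :=
  {n | ∃ z : Multiset ℚ, PM.IsFactorization P x z ∧ Multiset.card z = n}

/-- `P` is atomic: it is generated by its set of atoms. -/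
def PM.Atomic (P : AddSubmonoid ℚ) : Prop :=
  AddSubmonoid.closure {a | PM.IsAtom P a} = P

/-- The union of sets of lengths `U_k(P)`. -/
def PM.U (P : AddSubmonoid ℚ) (k : ℕ) : Set ℕ :=
  {l | ∃ x ∈ P, k ∈ PM.Lengths P x ∧ l ∈ PM.Lengths P x}

theorem stmt3 (P : AddSubmonoid ℚ) (hP : PM.Puiseux P) (hA : PM.Atomic P)
    (a₀ : ℚ) (ha₀ : PM.IsAtom P a₀)
    (hstable : {a : ℚ | PM.IsAtom P a ∧ a.num = a₀.num}.Infinite) :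
    ∃ d : ℕ, ∀ k ≥ d, (PM.U P k).Infinite := by
  have hden : ∀ b : ℚ, (b.den : ℚ) * b = (b.num : ℚ) := by
    intro b
    rw [mul_comm, ← eq_div_iff (by exact_mod_cast b.den_nz : (b.den:ℚ) ≠ 0)]
    exact (Rat.num_div_den b).symm
  refine ⟨a₀.den, fun k hk => ?_⟩
  set m := k - a₀.den with hm
  set x : ℚ := (a₀.num : ℚ) + m • a₀ with hx
  -- factorization for any atom b with same numerator
  have hfac : ∀ b : ℚ, PM.IsAtom P b → b.num = a₀.num →
      PM.IsFactorization P x (Multiset.replicate b.den b + Multiset.replicate m a₀) := by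
    intro b hb hnum
    constructor
    · intro a ha
      rcases Multiset.mem_add.1 ha with h | h
      · rw [Multiset.eq_of_mem_replicate h]; exact hb
      · rw [Multiset.eq_of_mem_replicate h]; exact ha₀
    · rw [Multiset.sum_add, Multiset.sum_replicate, Multiset.sum_replicate,
        nsmul_eq_mul, hden b, hnum, hx]
  have hxk : k ∈ PM.Lengths P x := by
    refine ⟨Multiset.replicate k a₀, ⟨?_, ?_⟩, Multiset.card_replicate _ _⟩
    · intro a ha; rw [Multiset.eq_of_mem_replicate ha]; exact ha₀
    · have : k = a₀.den + m := by omega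
      rw [this, Multiset.sum_replicate, add_nsmul, nsmul_eq_mul, hden a₀, hx]
  have hxP : x ∈ P := by
    rcases hxk with ⟨z, ⟨hz1, hz2⟩, -⟩
    rw [← hz2]
    exact AddSubmonoid.multiset_sum_mem P _ (fun a ha => (hz1 a ha).1)
  have hsub : (fun b : ℚ => b.den + m) '' {a : ℚ | PM.IsAtom P a ∧ a.num = a₀.num}
      ⊆ PM.U P k := by
    rintro l ⟨b, ⟨hb, hnum⟩, rfl⟩
    refine ⟨x, hxP, hxk, ?_⟩
    exact ⟨_, hfac b hb hnum, by simp⟩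
  refine Set.Infinite.mono hsub (Set.Infinite.image ?_ hstable)
  intro b₁ ⟨_, h₁⟩ b₂ ⟨_, h₂⟩ h
  simp only at h
  have : b₁.den = b₂.den := by omega
  exact Rat.ext (h₁.trans h₂.symm) this
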